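/- Fix ε ∈ (0,1) and a nonempty index set Γ. Suppose that for each A > 0 local thresholds a = a(A) > 0 and b = b(A) > 0 are given with a → ∞, b → ∞, a/A → 0, limsup a/b < ∞ and limsup b/a < ∞ as A → ∞, and that for each γ ∈ Γ and each A, (Y_n)_{n≥1} are i.i.d. random variables under P_γ taking only the values a and −b, with α̃_γ := P_γ(Y_1 = a) satisfying sup_{γ∈Γ} α̃_γ = e^{−(1+o(1)) a} as A → ∞. Then, uniformly in ρ ∈ [ε, 1] and γ ∈ Γ, P_γ(sup_{N ≥ 1} Σ_{n=1}^{N} Y_n ≥ ρ A) ≤ e^{−(1+o(1)) ρ A} as A → ∞; that is, for every δ > 0 there exists A_0 such that for all A ≥ A_0, all ρ ∈ [ε,1] and all γ ∈ Γ, P_γ(sup_{N≥1} Σ_{n=1}^N Y_n ≥ ρA) ≤ e^{−(1−δ) ρ A}. -/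

import Mathlib

/-!
Statement 5 (Lemma 2 of the paper, abstracted): uniform exponential bound
`P_γ(sup_N Σ_{n≤N} Y_n ≥ ρA) ≤ e^{-(1+o(1))ρA}` for the two-valued random walk
generated by the local one-bit messages, uniformly in `ρ ∈ [ε,1]` and `γ ∈ Γ`.
-/

open MeasureTheory ProbabilityTheory Filter

set_option maxHeartbeats 2000000 in
theorem lts_local_exponential_bound
    {Ω : Type*} [MeasurableSpace Ω] {ι : Type*} [Nonempty ι]
    (ε : ℝ) (hε : ε ∈ Set.Ioo (0 : ℝ) 1)
    -- local thresholds, as functions of the global threshold `A`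
    (a b : ℝ → ℝ)
    (hapos : ∀ A > (0 : ℝ), 0 < a A) (hbpos : ∀ A > (0 : ℝ), 0 < b A)
    (ha : Tendsto a atTop atTop) (hb : Tendsto b atTop atTop)
    (haA : Tendsto (fun A => a A / A) atTop (nhds 0))
    (hab : IsBoundedUnder (· ≤ ·) atTop (fun A => a A / b A))
    (hba : IsBoundedUnder (· ≤ ·) atTop (fun A => b A / a A))
    -- for each `γ ∈ ι` and each `A`, a probability measure and random variables `Y_n`
    (P : ι → ℝ → Measure Ω) (hP : ∀ γ A, IsProbabilityMeasure (P γ A))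
    (Y : ℝ → ℕ → Ω → ℝ)
    (hYmeas : ∀ A n, Measurable (Y A n))
    -- `(Y_n)_{n≥1}` take only the two values `a A` and `-b A` …
    (hvals : ∀ γ : ι, ∀ A > (0 : ℝ), ∀ n, 1 ≤ n → ∀ ω, Y A n ω = a A ∨ Y A n ω = -b A)
    -- … and are i.i.d. under `P γ A`
    (hindep : ∀ (γ : ι) (A : ℝ),
      iIndepFun (fun n : ℕ => Y A (n + 1)) (P γ A))
    (hident : ∀ (γ : ι) (A : ℝ), ∀ n, 1 ≤ n → (P γ A).map (Y A n) = (P γ A).map (Y A 1))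
    -- with `α̃_γ = P_γ(Y_1 = a)` satisfying `sup_γ α̃_γ = e^{-(1+o(1))a}` as `A → ∞`:
    (halpha : Tendsto
      (fun A => Real.log (⨆ γ : ι, ((P γ A) {ω | Y A 1 ω = a A}).toReal) / (-a A))
      atTop (nhds 1)) :
    -- conclusion: for every `δ > 0` there is `A₀` with, for all `A ≥ A₀`, `ρ ∈ [ε,1]`, `γ`:
    ∀ δ > (0 : ℝ), ∃ A₀ : ℝ, ∀ A ≥ A₀, ∀ ρ ∈ Set.Icc ε 1, ∀ γ : ι,
      (P γ A) {ω | ∃ N, 1 ≤ N ∧ ρ * A ≤ ∑ n ∈ Finset.Icc 1 N, Y A n ω}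
        ≤ ENNReal.ofReal (Real.exp (-((1 - δ) * ρ * A))) := by
  intro δ hδ
  obtain ⟨hε0, hε1⟩ := hε
  rcases le_or_gt 1 δ with hδ1 | hδ1
  · -- trivial case `δ ≥ 1` : the claimed bound is at least one
    refine ⟨1, fun A hA ρ hρ γ => ?_⟩
    have := hP γ A
    refine le_trans prob_le_one ?_
    rw [ENNReal.one_le_ofReal]
    refine Real.one_le_exp ?_
    have h1 : ε ≤ ρ := hρ.1
    have hρA : 0 < ρ * A := mul_pos (lt_of_lt_of_le hε0 h1) (lt_of_lt_of_le one_pos hA)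
    nlinarith
  · -- main case `0 < δ < 1`
    set α : ℝ → ℝ := fun A =>
      ⨆ γ : ι, ((P γ A) {ω | Y A 1 ω = a A}).toReal with hα_def
    -- eventual facts about `A`
    have hev1 : ∀ᶠ A in atTop, (0 : ℝ) < A := eventually_gt_atTop 0
    have hev2 : ∀ᶠ A in atTop, 1 - δ / 4 ≤ Real.log (α A) / (-a A) := by
      have : (1 : ℝ) - δ / 4 < 1 := by linarith
      filter_upwards [halpha.eventually (eventually_gt_nhds this)] with A hA using hA.le
    have hev3 : ∀ᶠ A in atTop, Real.log 4 ≤ 3 * δ / 8 * a A := by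
      filter_upwards [ha.eventually_ge_atTop (8 * Real.log 4 / (3 * δ))] with A hA
      rw [div_le_iff₀ (by positivity)] at hA
      nlinarith
    have hev4 : ∀ᶠ A in atTop, 8 * Real.log 4 ≤ b A := hb.eventually_ge_atTop _
    obtain ⟨A₀, hA₀⟩ := eventually_atTop.1 (hev1.and (hev2.and (hev3.and hev4)))
    refine ⟨A₀, fun A hA ρ hρ γ => ?_⟩
    obtain ⟨hApos, hL, h3, h4⟩ := hA₀ A hA
    have haA' : 0 < a A := hapos A hApos
    have hbA' : 0 < b A := hbpos A hApos
    have hlog4 : (0 : ℝ) ≤ Real.log 4 := Real.log_nonneg (by norm_num)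
    -- the exponent
    set L : ℝ := Real.log (α A) / (-a A) with hL_def
    set t : ℝ := (1 - δ / 2) * L with ht_def
    have hL34 : (3 : ℝ) / 4 ≤ L := by linarith
    have hlogα : Real.log (α A) ≤ -(3 / 4) * a A := by
      have hneg : -a A < 0 := by linarith
      rw [hL_def, le_div_iff_of_neg hneg] at hL34
      nlinarith
    have hαpos : 0 < α A := by
      by_contra h
      push_neg at h
      have hα0 : 0 ≤ α A := by
        apply Real.iSup_nonneg
        intro γ'
        exact ENNReal.toReal_nonneg
      have : α A = 0 := le_antisymm h hα0
      rw [this, Real.log_zero] at hlogα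
      nlinarith
    have ht1δ : 1 - δ ≤ t := by nlinarith
    have htpos : 0 < t := by linarith
    have ht38 : (3 : ℝ) / 8 ≤ t := by nlinarith
    -- `μ` and the basic facts about `Y`
    set μ : Measure Ω := P γ A with hμ_def
    have : IsProbabilityMeasure μ := hP γ A
    set S : Set Ω := {ω | Y A 1 ω = a A} with hS_def
    have hS : MeasurableSet S := (hYmeas A 1) (measurableSet_singleton (a A))
    set p : ℝ := (μ S).toReal with hp_def
    have hp0 : 0 ≤ p := ENNReal.toReal_nonneg
    have hp1 : p ≤ 1 := by
      rw [hp_def]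
      exact ENNReal.toReal_le_of_le_ofReal zero_le_one (by simpa using prob_le_one)
    have hpα : p ≤ α A := by
      refine le_ciSup (f := fun γ' : ι => ((P γ' A) S).toReal) ?_ γ
      refine ⟨1, ?_⟩
      rintro x ⟨γ', rfl⟩
      have := hP γ' A
      exact ENNReal.toReal_le_of_le_ofReal zero_le_one (by simpa using prob_le_one)
    -- integrability of `exp (t * Y n)`
    have hint : ∀ n, 1 ≤ n → Integrable (fun ω => Real.exp (t * Y A n ω)) μ := by
      intro n hn
      have hmeas : Measurable fun ω => Real.exp (t * Y A n ω) :=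
        (Real.measurable_exp.comp ((hYmeas A n).const_mul t))
      refine (integrable_const
          (max (Real.exp (t * a A)) (Real.exp (t * (-b A))))).mono'
        hmeas.aestronglyMeasurable ?_
      filter_upwards with ω
      rcases hvals γ A hApos n hn ω with h | h <;>
        rw [Real.norm_eq_abs, abs_of_pos (Real.exp_pos _), h]
      · exact le_max_left _ _
      · exact le_max_right _ _
    -- the one-step mgf
    set r : ℝ := mgf (Y A 1) μ t with hr_def
    have hr0 : 0 ≤ r := mgf_nonneg
    have hmgf1 : r = Real.exp (t * a A) * p + Real.exp (t * (-b A)) * (1 - p) := by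
      rw [hr_def, mgf]
      rw [← integral_add_compl hS (hint 1 le_rfl)]
      have h1 : ∫ ω in S, Real.exp (t * Y A 1 ω) ∂μ = Real.exp (t * a A) * p := by
        rw [setIntegral_congr_fun hS (g := fun _ => Real.exp (t * a A))
          (fun ω hω => by rw [Set.mem_setOf_eq] at hω; rw [hω])]
        rw [setIntegral_const]
        rw [smul_eq_mul, mul_comm]
        rfl
      have h2 : ∫ ω in Sᶜ, Real.exp (t * Y A 1 ω) ∂μ
          = Real.exp (t * (-b A)) * (1 - p) := by
        rw [setIntegral_congr_fun hS.compl (g := fun _ => Real.exp (t * (-b A)))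
          (fun ω hω => by
            rcases hvals γ A hApos 1 le_rfl ω with h | h
            · exact absurd h hω
            · rw [h])]
        rw [setIntegral_const]
        have hcompl : (μ Sᶜ).toReal = 1 - p := by
          rw [prob_compl_eq_one_sub hS, hp_def,
            ENNReal.toReal_sub_of_le prob_le_one ENNReal.one_ne_top, ENNReal.toReal_one]
        rw [measureReal_def, hcompl, smul_eq_mul, mul_comm]
      rw [h1, h2]
    -- bound `r ≤ 1/2`
    have hta : t * a A = -((1 - δ / 2) * Real.log (α A)) := by
      rw [ht_def, hL_def]
      field_simp
    have hαexp : α A * Real.exp (t * a A) ≤ 1 / 4 := by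
      have heq : α A * Real.exp (t * a A) = Real.exp (δ / 2 * Real.log (α A)) := by
        rw [hta, show -((1 - δ / 2) * Real.log (α A))
            = δ / 2 * Real.log (α A) - Real.log (α A) by ring,
          Real.exp_sub, Real.exp_log hαpos]
        field_simp
      rw [heq]
      have h1 : δ / 2 * Real.log (α A) ≤ -Real.log 4 := by nlinarith
      calc Real.exp (δ / 2 * Real.log (α A)) ≤ Real.exp (-Real.log 4) :=
            Real.exp_le_exp.2 h1
        _ = 1 / 4 := by
            rw [Real.exp_neg, Real.exp_log (by norm_num : (0:ℝ) < 4)]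
            norm_num
    have hbexp : Real.exp (t * (-b A)) ≤ 1 / 4 := by
      have h1 : t * (-b A) ≤ -Real.log 4 := by nlinarith
      calc Real.exp (t * (-b A)) ≤ Real.exp (-Real.log 4) := Real.exp_le_exp.2 h1
        _ = 1 / 4 := by
            rw [Real.exp_neg, Real.exp_log (by norm_num : (0:ℝ) < 4)]
            norm_num
    have hr12 : r ≤ 1 / 2 := by
      rw [hmgf1]
      have he1 : 0 < Real.exp (t * a A) := Real.exp_pos _
      have he2 : 0 < Real.exp (t * (-b A)) := Real.exp_pos _
      have k1 : Real.exp (t * a A) * p ≤ Real.exp (t * a A) * α A :=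
        mul_le_mul_of_nonneg_left hpα he1.le
      have k2 : Real.exp (t * (-b A)) * (1 - p) ≤ Real.exp (t * (-b A)) :=
        mul_le_of_le_one_right he2.le (by linarith)
      have k3 : Real.exp (t * a A) * α A ≤ 1 / 4 := by
        rw [mul_comm]; exact hαexp
      linarith
    -- all increments have the same mgf
    have hmgfn : ∀ n : ℕ, mgf (Y A (n + 1)) μ t = r := by
      intro n
      rw [hr_def, mgf, mgf]
      have hcont : ∀ ν : Measure ℝ, AEStronglyMeasurable (fun x : ℝ => Real.exp (t * x)) ν :=
        fun ν => (Real.continuous_exp.comp (continuous_const.mul continuous_id)).aestronglyMeasurable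
      calc ∫ ω, Real.exp (t * Y A (n + 1) ω) ∂μ
          = ∫ x, Real.exp (t * x) ∂(μ.map (Y A (n + 1))) :=
            (integral_map (hYmeas A (n + 1)).aemeasurable (hcont _)).symm
        _ = ∫ x, Real.exp (t * x) ∂(μ.map (Y A 1)) := by
            rw [hident γ A (n + 1) (Nat.le_add_left 1 n)]
        _ = ∫ ω, Real.exp (t * Y A 1 ω) ∂μ :=
            integral_map (hYmeas A 1).aemeasurable (hcont _)
    -- Chernoff bound for each fixed horizon
    have hcher : ∀ N : ℕ,
        (μ {ω | ρ * A ≤ ∑ i ∈ Finset.range N, Y A (i + 1) ω}).toReal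
          ≤ Real.exp (-t * (ρ * A)) * r ^ N := by
      intro N
      have hfun : (∑ i ∈ Finset.range N, fun ω => Y A (i + 1) ω)
          = fun ω => ∑ i ∈ Finset.range N, Y A (i + 1) ω := by
        funext ω; simp
      have hintN : Integrable
          (fun ω => Real.exp (t * (∑ i ∈ Finset.range N, Y A (i + 1) ω))) μ := by
        have := (hindep γ A).integrable_exp_mul_sum (fun i => hYmeas A (i + 1))
          (s := Finset.range N) (t := t) (fun i _ => hint (i + 1) (Nat.le_add_left 1 i))
        rw [hfun] at this
        exact this
      have hch := measure_ge_le_exp_mul_mgf (μ := μ)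
        (X := fun ω => ∑ i ∈ Finset.range N, Y A (i + 1) ω) (ρ * A) htpos.le hintN
      have hmgfsum : mgf (fun ω => ∑ i ∈ Finset.range N, Y A (i + 1) ω) μ t = r ^ N := by
        rw [← hfun, (hindep γ A).mgf_sum (fun i => hYmeas A (i + 1)) (Finset.range N)]
        rw [Finset.prod_congr rfl (fun i _ => hmgfn i), Finset.prod_const,
          Finset.card_range]
      rw [hmgfsum] at hch
      exact hch
    -- from `Icc 1 N` sums to `range N` sums
    have hsumeq : ∀ (N : ℕ) (ω : Ω),
        ∑ n ∈ Finset.Icc 1 N, Y A n ω = ∑ i ∈ Finset.range N, Y A (i + 1) ω := by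
      intro N ω
      rw [← Finset.Ico_add_one_right_eq_Icc, Finset.sum_Ico_eq_sum_range]
      simp [add_comm]
    -- union bound
    have hρA : 0 < ρ * A := mul_pos (lt_of_lt_of_le hε0 hρ.1) hApos
    set c : ℝ := Real.exp (-t * (ρ * A)) with hc_def
    have hc0 : 0 < c := Real.exp_pos _
    have hsub : {ω | ∃ N, 1 ≤ N ∧ ρ * A ≤ ∑ n ∈ Finset.Icc 1 N, Y A n ω}
        ⊆ ⋃ k : ℕ, {ω | ρ * A ≤ ∑ i ∈ Finset.range (k + 1), Y A (i + 1) ω} := by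
      rintro ω ⟨N, hN1, hN⟩
      refine Set.mem_iUnion.2 ⟨N - 1, ?_⟩
      rw [Set.mem_setOf_eq, Nat.sub_add_cancel hN1, ← hsumeq]
      exact hN
    have hsummable : Summable (fun k : ℕ => c * r ^ (k + 1)) := by
      have : Summable (fun k : ℕ => (c * r) * r ^ k) :=
        (summable_geometric_of_lt_one hr0 (by linarith)).mul_left _
      refine this.congr fun k => ?_
      rw [pow_succ]
      ring
    calc μ {ω | ∃ N, 1 ≤ N ∧ ρ * A ≤ ∑ n ∈ Finset.Icc 1 N, Y A n ω}
        ≤ μ (⋃ k : ℕ, {ω | ρ * A ≤ ∑ i ∈ Finset.range (k + 1), Y A (i + 1) ω}) :=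
          measure_mono hsub
      _ ≤ ∑' k : ℕ, μ {ω | ρ * A ≤ ∑ i ∈ Finset.range (k + 1), Y A (i + 1) ω} :=
          measure_iUnion_le _
      _ ≤ ∑' k : ℕ, ENNReal.ofReal (c * r ^ (k + 1)) := by
          refine ENNReal.tsum_le_tsum fun k => ?_
          rw [← ENNReal.ofReal_toReal
            (measure_ne_top μ {ω | ρ * A ≤ ∑ i ∈ Finset.range (k + 1), Y A (i + 1) ω})]
          exact ENNReal.ofReal_le_ofReal (hcher (k + 1))
      _ = ENNReal.ofReal (∑' k : ℕ, c * r ^ (k + 1)) :=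
          (ENNReal.ofReal_tsum_of_nonneg
            (fun k => by positivity) hsummable).symm
      _ ≤ ENNReal.ofReal (Real.exp (-((1 - δ) * ρ * A))) := by
          refine ENNReal.ofReal_le_ofReal ?_
          have htsum : ∑' k : ℕ, c * r ^ (k + 1) = (c * r) * (1 - r)⁻¹ := by
            have h1 : ∀ k : ℕ, c * r ^ (k + 1) = (c * r) * r ^ k := by
              intro k; rw [pow_succ]; ring
            rw [tsum_congr h1, tsum_mul_left,
              tsum_geometric_of_lt_one hr0 (by linarith)]
          rw [htsum]
          have hinv : (1 - r)⁻¹ ≤ 2 := by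
            rw [inv_le_comm₀ (by linarith) (by norm_num)]
            linarith
          have hc_le : c ≤ Real.exp (-((1 - δ) * ρ * A)) := by
            refine Real.exp_le_exp.2 ?_
            nlinarith
          calc (c * r) * (1 - r)⁻¹ ≤ (c * r) * 2 := by
                refine mul_le_mul_of_nonneg_left hinv (by positivity)
            _ ≤ c := by nlinarith
            _ ≤ Real.exp (-((1 - δ) * ρ * A)) := hc_le
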